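/- arXiv:2303.10153 — 3 statements merged into one kernel-verified Lean document; each statement's English description precedes it below -/
import Mathlib

section
/- Let α, a > 0 and 0 ≤ t₀ < T*. Suppose y ∈ C¹([t₀,T*), ℝⁿ) satisfies y(t) ≠ 0 for all t, |y(t)| → ∞ as t → T*⁻, and y' = a|y|^α y + f(t) on (t₀,T*), where f is continuous with |f(t)| ≤ |y(t)|^{1+α} E₀(t) for an integrable E₀ : [t₀,T*) → [0,∞) satisfying (1/(T*−t))∫_t^{T*}E₀(τ)dτ → 0 as t → T*⁻. Then there exist constants C₁, C₂ > 0 such that C₁(T*−t)^{−1/α} ≤ |y(t)| ≤ C₂(T*−t)^{−1/α} for all t ∈ [t₀, T*). -/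
open scoped Topology
open MeasureTheory Set Filter

lemma deriv_g_aux {n : ℕ} {α a : ℝ} {y f : ℝ → EuclideanSpace ℝ (Fin n)} {t : ℝ}
    (hy : y t ≠ 0) (hd : HasDerivAt y ((a * ‖y t‖ ^ α) • y t + f t) t) :
    HasDerivAt (fun s => ‖y s‖ ^ (-α))
      (-(α * a) - α * (inner ℝ (y t) (f t) : ℝ) * ‖y t‖ ^ (-(α + 2))) t := by
  have hx : (0:ℝ) < ‖y t‖ := norm_pos_iff.mpr hy
  have hu := hd.norm_sq
  have h2 := hu.rpow_const (p := -α/2) (Or.inl (by positivity))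
  have hfun : (fun s => ‖y s‖ ^ (-α)) = fun s => (‖y s‖ ^ 2 : ℝ) ^ (-α/2 : ℝ) := by
    funext s
    rw [← Real.rpow_two, ← Real.rpow_mul (norm_nonneg _)]
    congr 1; ring
  rw [hfun]
  convert h2 using 1
  have hinner : (inner ℝ (y t) ((a * ‖y t‖ ^ α) • y t + f t) : ℝ)
      = a * ‖y t‖ ^ α * ‖y t‖ ^ 2 + inner ℝ (y t) (f t) := by
    rw [inner_add_right, real_inner_smul_right, real_inner_self_eq_norm_sq]
  rw [hinner]
  have hp : (‖y t‖ ^ 2 : ℝ) ^ (-α/2 - 1 : ℝ) = ‖y t‖ ^ (-(α+2)) := by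
    rw [← Real.rpow_two, ← Real.rpow_mul (norm_nonneg _)]
    ring_nf
  rw [hp]
  have key : ‖y t‖ ^ (-(α+2)) * (‖y t‖ ^ α * ‖y t‖ ^ 2) = 1 := by
    rw [← Real.rpow_two, ← Real.rpow_add hx, ← Real.rpow_add hx,
      show -(α + 2) + (α + 2) = (0:ℝ) by ring, Real.rpow_zero]
  linear_combination (α * a) * key

theorem stmt_11 {n : ℕ} (α a t₀ T : ℝ) (hα : 0 < α) (ha : 0 < a)
    (h0 : 0 ≤ t₀) (hT : t₀ < T)
    (y f : ℝ → EuclideanSpace ℝ (Fin n)) (E₀ : ℝ → ℝ)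
    (hycont : ContinuousOn y (Ico t₀ T))
    (hy0 : ∀ t ∈ Ico t₀ T, y t ≠ 0)
    (hblow : Tendsto (fun t => ‖y t‖) (𝓝[<] T) atTop)
    (hode : ∀ t ∈ Ioo t₀ T, HasDerivAt y ((a * ‖y t‖ ^ α) • y t + f t) t)
    (hfcont : ContinuousOn f (Ico t₀ T))
    (hE0nn : ∀ t ∈ Ico t₀ T, 0 ≤ E₀ t)
    (hfE : ∀ t ∈ Ico t₀ T, ‖f t‖ ≤ ‖y t‖ ^ (1 + α) * E₀ t)
    (hE0int : IntegrableOn E₀ (Ico t₀ T))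
    (havg : Tendsto (fun t => (1 / (T - t)) * ∫ τ in Ico t T, E₀ τ) (𝓝[<] T) (𝓝 0)) :
    ∃ C₁ > (0:ℝ), ∃ C₂ > (0:ℝ), ∀ t ∈ Ico t₀ T,
      C₁ * (T - t) ^ (-(1:ℝ)/α) ≤ ‖y t‖ ∧ ‖y t‖ ≤ C₂ * (T - t) ^ (-(1:ℝ)/α) := by
  have hn : ∀ t ∈ Ico t₀ T, (0:ℝ) < ‖y t‖ := fun t ht => norm_pos_iff.mpr (hy0 t ht)
  set g : ℝ → ℝ := fun t => ‖y t‖ ^ (-α) with hgdef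
  set r : ℝ → ℝ := fun t => -(α * (inner ℝ (y t) (f t) : ℝ) * ‖y t‖ ^ (-(α + 2))) with hrdef
  have hgd : ∀ t ∈ Ioo t₀ T, HasDerivAt g (-(α * a) + r t) t := by
    intro t ht
    have := deriv_g_aux (hy0 t (Ioo_subset_Ico_self ht)) (hode t ht)
    simpa [hgdef, hrdef, sub_eq_add_neg] using this
  -- pointwise bound on r
  have hrb : ∀ t ∈ Ico t₀ T, |r t| ≤ α * E₀ t := by
    intro t ht
    have hx : (0:ℝ) < ‖y t‖ := hn t ht
    have hP : (0:ℝ) < ‖y t‖ ^ (-(α + 2)) := Real.rpow_pos_of_pos hx _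
    have key2 : ‖y t‖ ^ (1+α) * ‖y t‖ ^ (-(α+2)) * ‖y t‖ = 1 := by
      have e1 : ‖y t‖ ^ (1+α) * ‖y t‖ ^ (-(α+2)) = ‖y t‖ ^ (-(1:ℝ)) := by
        rw [← Real.rpow_add hx]; congr 1; ring
      rw [e1, Real.rpow_neg_one, inv_mul_cancel₀ hx.ne']
    have hiy : |(inner ℝ (y t) (f t) : ℝ)| ≤ ‖y t‖ * ‖f t‖ := abs_real_inner_le_norm _ _
    calc |r t| = α * |(inner ℝ (y t) (f t) : ℝ)| * (‖y t‖ ^ (-(α + 2))) := by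
          rw [hrdef]
          rw [abs_neg, abs_mul, abs_mul, abs_of_nonneg hα.le,
            abs_of_nonneg hP.le]
      _ ≤ α * (‖y t‖ * ‖f t‖) * (‖y t‖ ^ (-(α + 2))) := by gcongr
      _ ≤ α * (‖y t‖ * (‖y t‖ ^ (1+α) * E₀ t)) * (‖y t‖ ^ (-(α + 2))) := by
          gcongr
          exact hfE t ht
      _ = α * E₀ t * (‖y t‖ ^ (1+α) * ‖y t‖ ^ (-(α+2)) * ‖y t‖) := by ring
      _ = α * E₀ t := by rw [key2, mul_one]
  -- continuity of r on Ico t₀ T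
  have hrc : ContinuousOn r (Ico t₀ T) := by
    apply ContinuousOn.neg
    apply ContinuousOn.mul
    · exact (continuousOn_const.mul (hycont.inner hfcont))
    · exact (hycont.norm).rpow_const (fun t ht => Or.inl (hn t ht).ne')
  have hg0 : Tendsto g (𝓝[<] T) (𝓝 0) := (tendsto_rpow_neg_atTop hα).comp hblow
  have hTs0 : Tendsto (fun t : ℝ => T - t) (𝓝[<] T) (𝓝 0) := by
    have : Tendsto (fun t : ℝ => T - t) (𝓝 T) (𝓝 (T - T)) :=
      (continuous_const.sub continuous_id).tendsto T
    simpa using this.mono_left nhdsWithin_le_nhds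
  -- main integral estimate
  have hmain : ∀ s ∈ Ioo t₀ T, |g s - α * a * (T - s)| ≤ α * ∫ τ in Ico s T, E₀ τ := by
    intro s hs
    set B := α * ∫ τ in Ico s T, E₀ τ with hBdef
    have hE0s : IntegrableOn E₀ (Ico s T) := hE0int.mono_set (Ico_subset_Ico_left hs.1.le)
    have hkey : ∀ t ∈ Ioo s T, g s = g t + α * a * (t - s) - ∫ τ in s..t, r τ := by
      intro t ht
      have hsub : uIcc s t ⊆ Ioo t₀ T := by
        rw [uIcc_of_le ht.1.le]
        exact Icc_subset_Ioo hs.1 ht.2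
      have hri : IntervalIntegrable r volume s t :=
        (hrc.mono (fun x hx => Ioo_subset_Ico_self (hsub hx))).intervalIntegrable
      have hDi : IntervalIntegrable (fun τ => -(α*a) + r τ) volume s t :=
        (intervalIntegrable_const).add hri
      have hftc := intervalIntegral.integral_eq_sub_of_hasDerivAt
        (f := g) (f' := fun τ => -(α*a) + r τ) (fun τ hτ => hgd τ (hsub hτ)) hDi
      rw [intervalIntegral.integral_add intervalIntegrable_const hri,
        intervalIntegral.integral_const] at hftc
      simp only [smul_eq_mul] at hftc
      linarith [hftc]
    have hRb : ∀ t ∈ Ioo s T, |∫ τ in s..t, r τ| ≤ B := by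
      intro t ht
      have hIcc : Icc s t ⊆ Ico t₀ T := fun x hx =>
        ⟨hs.1.le.trans hx.1, lt_of_le_of_lt hx.2 ht.2⟩
      have hrc' : ContinuousOn r (uIcc s t) := hrc.mono (by rw [uIcc_of_le ht.1.le]; exact hIcc)
      have hri : IntervalIntegrable r volume s t := hrc'.intervalIntegrable
      have hE0i : IntervalIntegrable (fun τ => α * E₀ τ) volume s t := by
        apply IntegrableOn.intervalIntegrable
        rw [uIcc_of_le ht.1.le]
        exact (hE0int.mono_set hIcc).const_mul α
      calc |∫ τ in s..t, r τ| ≤ ∫ τ in s..t, |r τ| :=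
            intervalIntegral.abs_integral_le_integral_abs ht.1.le
        _ ≤ ∫ τ in s..t, α * E₀ τ := by
            apply intervalIntegral.integral_mono_on ht.1.le hri.abs hE0i
            exact fun x hx => hrb x (hIcc hx)
        _ = α * ∫ τ in Ioc s t, E₀ τ := by
            rw [intervalIntegral.integral_of_le ht.1.le, integral_const_mul]
        _ ≤ B := by
            rw [hBdef]
            gcongr α * ?_
            apply setIntegral_mono_set hE0s
            · exact (ae_restrict_iff' measurableSet_Ico).mpr
                (Eventually.of_forall (fun x hx => hE0nn x ⟨hs.1.le.trans hx.1, hx.2⟩))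
            · exact HasSubset.Subset.eventuallyLE
                (fun x hx => ⟨hx.1.le, lt_of_le_of_lt hx.2 ht.2⟩)
    have h1 : Tendsto (fun t => g t + α * a * (t - s)) (𝓝[<] T) (𝓝 (α * a * (T - s))) := by
      have h2 : Tendsto (fun t : ℝ => α * a * (t - s)) (𝓝[<] T) (𝓝 (α * a * (T - s))) := by
        apply Tendsto.mono_left _ nhdsWithin_le_nhds
        exact (continuous_const.mul (continuous_id.sub continuous_const)).tendsto T
      simpa using hg0.add h2
    have hIoo : Ioo s T ∈ 𝓝[<] T := Ioo_mem_nhdsLT_of_mem ⟨hs.2, le_refl T⟩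
    have hub : α * a * (T - s) ≤ g s + B := by
      apply le_of_tendsto h1
      filter_upwards [hIoo] with t ht
      have := hkey t ht
      have := (abs_le.mp (hRb t ht)).2
      linarith
    have hlb : g s - B ≤ α * a * (T - s) := by
      apply ge_of_tendsto h1
      filter_upwards [hIoo] with t ht
      have := hkey t ht
      have := (abs_le.mp (hRb t ht)).1
      linarith
    rw [abs_le]; constructor <;> linarith
  -- choose t₁ close to T
  have hev : {t : ℝ | (1 / (T - t)) * ∫ τ in Ico t T, E₀ τ < a/2} ∈ 𝓝[<] T :=
    havg.eventually (gt_mem_nhds (half_pos ha))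
  have hev2 : Ioo t₀ T ∈ 𝓝[<] T := Ioo_mem_nhdsLT_of_mem ⟨hT, le_refl T⟩
  obtain ⟨l, hlT, hl⟩ := (mem_nhdsLT_iff_exists_Ioo_subset).mp (inter_mem hev hev2)
  set t₁ : ℝ := (max l t₀ + T) / 2 with ht₁def
  have hmlt : max l t₀ < T := max_lt hlT hT
  have h1 : max l t₀ < t₁ := by rw [ht₁def]; linarith
  have h2 : t₁ < T := by rw [ht₁def]; linarith
  have ht₀t₁ : t₀ < t₁ := lt_of_le_of_lt (le_max_right l t₀) h1
  -- bounds on g near T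
  have hnear : ∀ s ∈ Ico t₁ T, α*a/2 * (T-s) ≤ g s ∧ g s ≤ 3*α*a/2 * (T-s) := by
    intro s hsm
    have hsl : s ∈ Ioo l T :=
      ⟨lt_of_le_of_lt (le_max_left l t₀) (lt_of_lt_of_le h1 hsm.1), hsm.2⟩
    obtain ⟨hPavg, hsIoo⟩ := hl hsl
    have hTs : 0 < T - s := by linarith [hsm.2]
    have hI : (∫ τ in Ico s T, E₀ τ) ≤ a/2 * (T - s) := by
      have h' : (∫ τ in Ico s T, E₀ τ) / (T - s) < a/2 := by
        rw [div_eq_inv_mul, ← one_div]; exact hPavg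
      linarith [(div_lt_iff₀ hTs).mp h']
    have hm := hmain s hsIoo
    have hB : α * ∫ τ in Ico s T, E₀ τ ≤ α * (a/2 * (T-s)) :=
      mul_le_mul_of_nonneg_left hI hα.le
    rw [abs_le] at hm
    constructor <;> nlinarith [hm.1, hm.2, hB]
  -- bounds on ‖y‖ near T
  have hnear' : ∀ s ∈ Ico t₁ T,
      (3*α*a/2) ^ (-(1:ℝ)/α) * (T - s) ^ (-(1:ℝ)/α) ≤ ‖y s‖ ∧
      ‖y s‖ ≤ (α*a/2) ^ (-(1:ℝ)/α) * (T - s) ^ (-(1:ℝ)/α) := by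
    intro s hsm
    obtain ⟨hlo, hhi⟩ := hnear s hsm
    have hx : 0 < ‖y s‖ := hn s ⟨le_trans ht₀t₁.le hsm.1, hsm.2⟩
    have hTs : 0 < T - s := by linarith [hsm.2]
    have hgpos : 0 < g s := Real.rpow_pos_of_pos hx _
    have hwneg : (-(1:ℝ)/α) ≤ 0 := (div_neg_of_neg_of_pos (by norm_num) hα).le
    have hxw : (g s) ^ (-(1:ℝ)/α) = ‖y s‖ := by
      simp only [hgdef]
      rw [← Real.rpow_mul (norm_nonneg _),
        show -α * (-(1:ℝ)/α) = 1 by field_simp, Real.rpow_one]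
    constructor
    · have h3 := Real.rpow_le_rpow_of_nonpos hgpos hhi hwneg
      rw [hxw] at h3
      calc (3*α*a/2) ^ (-(1:ℝ)/α) * (T-s) ^ (-(1:ℝ)/α)
          = (3*α*a/2*(T-s)) ^ (-(1:ℝ)/α) := (Real.mul_rpow (by positivity) hTs.le).symm
        _ ≤ ‖y s‖ := h3
    · have h4 := Real.rpow_le_rpow_of_nonpos (by positivity) hlo hwneg
      rw [hxw] at h4
      calc ‖y s‖ ≤ (α*a/2*(T-s)) ^ (-(1:ℝ)/α) := h4
        _ = (α*a/2) ^ (-(1:ℝ)/α) * (T-s) ^ (-(1:ℝ)/α) := Real.mul_rpow (by positivity) hTs.le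
  -- compact part
  have hKsub : Icc t₀ t₁ ⊆ Ico t₀ T := fun x hx => ⟨hx.1, lt_of_le_of_lt hx.2 h2⟩
  have hKne : (Icc t₀ t₁).Nonempty := ⟨t₀, le_refl _, ht₀t₁.le⟩
  have hhc : ContinuousOn (fun t => ‖y t‖ * (T - t) ^ ((1:ℝ)/α)) (Icc t₀ t₁) := by
    apply ContinuousOn.mul ((hycont.mono hKsub).norm)
    apply ContinuousOn.rpow_const ((continuous_const.sub continuous_id).continuousOn)
    intro x hx
    exact Or.inl (ne_of_gt (sub_pos.mpr (lt_of_le_of_lt hx.2 h2)))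
  obtain ⟨zm, hzm, hmin'⟩ := isCompact_Icc.exists_isMinOn hKne hhc
  obtain ⟨zM, hzM, hmax'⟩ := isCompact_Icc.exists_isMaxOn hKne hhc
  have hmin := isMinOn_iff.mp hmin'
  have hmax := isMaxOn_iff.mp hmax'
  set m := ‖y zm‖ * (T - zm) ^ ((1:ℝ)/α) with hmdef
  set M := ‖y zM‖ * (T - zM) ^ ((1:ℝ)/α) with hMdef
  have hmpos : 0 < m :=
    mul_pos (hn zm (hKsub hzm))
      (Real.rpow_pos_of_pos (sub_pos.mpr (lt_of_le_of_lt hzm.2 h2)) _)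
  refine ⟨min ((3*α*a/2) ^ (-(1:ℝ)/α)) m, ?_, max ((α*a/2) ^ (-(1:ℝ)/α)) M, ?_, ?_⟩
  · exact lt_min (Real.rpow_pos_of_pos (by positivity) _) hmpos
  · exact lt_of_lt_of_le (Real.rpow_pos_of_pos (by positivity) _) (le_max_left _ _)
  intro t ht
  have hTt : 0 < T - t := sub_pos.mpr ht.2
  have hppos : 0 ≤ (T - t) ^ (-(1:ℝ)/α) := (Real.rpow_pos_of_pos hTt _).le
  rcases le_or_gt t₁ t with hcase | hcase
  · obtain ⟨hl', hr'⟩ := hnear' t ⟨hcase, ht.2⟩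
    constructor
    · calc min ((3*α*a/2) ^ (-(1:ℝ)/α)) m * (T-t) ^ (-(1:ℝ)/α)
          ≤ (3*α*a/2) ^ (-(1:ℝ)/α) * (T-t) ^ (-(1:ℝ)/α) := by
            gcongr; exact min_le_left _ _
        _ ≤ ‖y t‖ := hl'
    · calc ‖y t‖ ≤ (α*a/2) ^ (-(1:ℝ)/α) * (T-t) ^ (-(1:ℝ)/α) := hr'
        _ ≤ max ((α*a/2) ^ (-(1:ℝ)/α)) M * (T-t) ^ (-(1:ℝ)/α) := by
            gcongr; exact le_max_left _ _
  · have htK : t ∈ Icc t₀ t₁ := ⟨ht.1, hcase.le⟩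
    have hp : 0 < (T - t) ^ ((1:ℝ)/α) := Real.rpow_pos_of_pos hTt _
    have hrpw : (T - t) ^ (-(1:ℝ)/α) = ((T - t) ^ ((1:ℝ)/α))⁻¹ := by
      rw [neg_div, Real.rpow_neg hTt.le]
    constructor
    · rw [hrpw, ← div_eq_mul_inv, div_le_iff₀ hp]
      calc min ((3*α*a/2) ^ (-(1:ℝ)/α)) m ≤ m := min_le_right _ _
        _ ≤ ‖y t‖ * (T - t) ^ ((1:ℝ)/α) := hmin t htK
    · rw [hrpw, ← div_eq_mul_inv, le_div_iff₀ hp]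
      calc ‖y t‖ * (T - t) ^ ((1:ℝ)/α) ≤ M := hmax t htK
        _ ≤ max ((α*a/2) ^ (-(1:ℝ)/α)) M := le_max_right _ _
end

section
/- Let α, a > 0, 0 ≤ t₀ < T*, and suppose y ∈ C¹([t₀,T*), ℝⁿ) satisfies y(t) ≠ 0 for all t, |y(t)| → ∞ as t → T*⁻, and y' = a|y|^α y + f(t) on (t₀,T*), where f is continuous and |f(t)| ≤ |y(t)|^{1+α} E₀(t) with E₀ : [t₀,T*) → [0,∞) satisfying ∫_{t₀}^{T*} E₀(τ)/(T*−τ) dτ < ∞. Then the limit ξ* = lim_{t→T*⁻} (T*−t)^{1/α} y(t) exists, ξ* ≠ 0, |ξ*| = (αa)^{−1/α}, and |(T*−t)^{1/α} y(t) − ξ*| = O(E₁(t)) as t → T*⁻, where E₁(t) = ∫_t^{T*} E₀(τ)/(T*−τ) dτ. -/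
open scoped Topology

open MeasureTheory Set Filter

private lemma norm_rpow_eq_inner {n : ℕ} (v : EuclideanSpace ℝ (Fin n)) (p : ℝ) :
    ‖v‖ ^ p = (inner ℝ v v : ℝ) ^ (p / 2) := by
  rw [real_inner_self_eq_norm_sq, ← Real.rpow_natCast ‖v‖ 2,
    ← Real.rpow_mul (norm_nonneg v)]
  congr 1
  push_cast
  ring

private lemma rpow_lip {p δ M : ℝ} (hp : 0 < p) (hδ : 0 < δ) {x z : ℝ}
    (hx : x ∈ Icc δ M) (hz : z ∈ Icc δ M) :
    |x ^ p - z ^ p| ≤ (p * (δ ^ (p - 1) + M ^ (p - 1))) * |x - z| := by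
  have key := Convex.norm_image_sub_le_of_norm_hasDerivWithin_le
    (f := fun t : ℝ => t ^ p) (f' := fun t : ℝ => p * t ^ (p - 1))
    (s := Icc δ M) (C := p * (δ ^ (p - 1) + M ^ (p - 1)))
    (fun t ht => (Real.hasDerivAt_rpow_const
      (Or.inl (ne_of_gt (lt_of_lt_of_le hδ ht.1)))).hasDerivWithinAt)
    (fun t ht => by
      have htpos : 0 < t := lt_of_lt_of_le hδ ht.1
      rw [Real.norm_eq_abs, abs_mul, abs_of_pos hp,
        abs_of_pos (Real.rpow_pos_of_pos htpos _)]
      have hb : t ^ (p - 1) ≤ δ ^ (p - 1) + M ^ (p - 1) := by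
        rcases le_or_gt 0 (p - 1) with h1 | h1
        · have h2 : t ^ (p - 1) ≤ M ^ (p - 1) :=
            Real.rpow_le_rpow (le_of_lt htpos) ht.2 h1
          have hδ' : 0 ≤ δ ^ (p - 1) := le_of_lt (Real.rpow_pos_of_pos hδ _)
          linarith
        · have h2 : t ^ (p - 1) ≤ δ ^ (p - 1) :=
            Real.rpow_le_rpow_of_nonpos hδ ht.1 (le_of_lt h1)
          have hM' : 0 ≤ M ^ (p - 1) :=
            le_of_lt (Real.rpow_pos_of_pos (lt_of_lt_of_le hδ (hx.1.trans hx.2)) _)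
          linarith
      exact mul_le_mul_of_nonneg_left hb (le_of_lt hp))
    (convex_Icc δ M) hz hx
  simpa [Real.norm_eq_abs] using key

set_option maxHeartbeats 1000000 in
theorem stmt_12 {n : ℕ} (α a t₀ T : ℝ) (hα : 0 < α) (ha : 0 < a)
    (h0 : 0 ≤ t₀) (hT : t₀ < T)
    (y f : ℝ → EuclideanSpace ℝ (Fin n)) (E₀ : ℝ → ℝ)
    (hycont : ContinuousOn y (Ico t₀ T))
    (hy0 : ∀ t ∈ Ico t₀ T, y t ≠ 0)
    (hblow : Tendsto (fun t => ‖y t‖) (𝓝[<] T) atTop)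
    (hode : ∀ t ∈ Ioo t₀ T, HasDerivAt y ((a * ‖y t‖ ^ α) • y t + f t) t)
    (hfcont : ContinuousOn f (Ico t₀ T))
    (hE0nn : ∀ t ∈ Ico t₀ T, 0 ≤ E₀ t)
    (hfE : ∀ t ∈ Ico t₀ T, ‖f t‖ ≤ ‖y t‖ ^ (1 + α) * E₀ t)
    (hE1int : IntegrableOn (fun τ => E₀ τ / (T - τ)) (Ico t₀ T)) :
    ∃ ξ : EuclideanSpace ℝ (Fin n), ξ ≠ 0 ∧ ‖ξ‖ = (α * a) ^ (-(1:ℝ)/α) ∧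
      Tendsto (fun t => (T - t) ^ ((1:ℝ)/α) • y t) (𝓝[<] T) (𝓝 ξ) ∧
      ∃ C > (0:ℝ), ∀ᶠ t in 𝓝[<] T,
        ‖(T - t) ^ ((1:ℝ)/α) • y t - ξ‖ ≤ C * ∫ τ in Ico t T, E₀ τ / (T - τ) := by
  classical
  set c : ℝ := α * a with hcdef
  have hc : 0 < c := mul_pos hα ha
  set g₀ : ℝ → ℝ := fun τ => E₀ τ / (T - τ) with hg₀def
  set E₁ : ℝ → ℝ := fun t => ∫ τ in Ico t T, g₀ τ with hE₁def
  have hg0nn : ∀ τ ∈ Ico t₀ T, 0 ≤ g₀ τ := fun τ hτ =>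
    div_nonneg (hE0nn τ hτ) (by linarith [hτ.2])
  have hIoomem : ∀ x, x < T → Ioo x T ∈ 𝓝[<] T := fun x hx =>
    Ioo_mem_nhdsLT_of_mem ⟨hx, le_refl T⟩
  have tendT : Tendsto (fun b : ℝ => b) (𝓝[<] T) (𝓝 T) :=
    tendsto_id.mono_right nhdsWithin_le_nhds
  -- E₀ relation with g₀ on the interval
  have hE0g : ∀ τ ∈ Ico t₀ T, E₀ τ = (T - τ) * g₀ τ := by
    intro τ hτ
    have hne : T - τ ≠ 0 := by
      have := hτ.2; intro h; simp only [sub_eq_zero] at h; exact absurd h.symm (ne_of_lt this)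
    simp only [hg₀def]
    rw [mul_comm, div_mul_cancel₀ _ hne]
  -- integrability of E₀
  have hE0int : IntegrableOn E₀ (Ico t₀ T) := by
    have hmeas : AEStronglyMeasurable E₀ (volume.restrict (Ico t₀ T)) := by
      have h1 : AEStronglyMeasurable (fun τ => (T - τ) * g₀ τ)
          (volume.restrict (Ico t₀ T)) :=
        ((continuous_const.sub continuous_id).aestronglyMeasurable).mul
          (Integrable.aestronglyMeasurable hE1int)
      refine h1.congr ?_
      filter_upwards [ae_restrict_mem measurableSet_Ico] with τ hτ
      exact (hE0g τ hτ).symm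
    refine Integrable.mono' (Integrable.const_mul hE1int (T - t₀)) hmeas ?_
    filter_upwards [ae_restrict_mem measurableSet_Ico] with τ hτ
    rw [Real.norm_eq_abs, abs_of_nonneg (hE0nn τ hτ), hE0g τ hτ]
    exact mul_le_mul_of_nonneg_right (by linarith [hτ.1]) (hg0nn τ hτ)
  have hE0ints : ∀ s ∈ Ico t₀ T, IntegrableOn E₀ (Ico s T) := fun s hs =>
    hE0int.mono_set (Ico_subset_Ico_left hs.1)
  have hg0ints : ∀ s ∈ Ico t₀ T, IntegrableOn g₀ (Ico s T) := fun s hs =>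
    hE1int.mono_set (Ico_subset_Ico_left hs.1)
  have hE0bound : ∀ s ∈ Ico t₀ T, (∫ τ in Ico s T, E₀ τ) ≤ (T - s) * E₁ s := by
    intro s hs
    have h1 : (T - s) * E₁ s = ∫ τ in Ico s T, (T - s) * g₀ τ := by
      simp only [hE₁def]
      exact (integral_const_mul _ _).symm
    rw [h1]
    refine setIntegral_mono_on (hE0ints s hs) (Integrable.const_mul (hg0ints s hs) _)
      measurableSet_Ico ?_
    intro τ hτ
    have hτ' : τ ∈ Ico t₀ T := ⟨le_trans hs.1 hτ.1, hτ.2⟩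
    rw [hE0g τ hτ']
    exact mul_le_mul_of_nonneg_right (by linarith [hτ.1]) (hg0nn τ hτ')
  have hE1nn : ∀ s ∈ Ico t₀ T, 0 ≤ E₁ s := fun s hs =>
    setIntegral_nonneg measurableSet_Ico
      (fun τ hτ => hg0nn τ ⟨le_trans hs.1 hτ.1, hτ.2⟩)
  -- E₁ tends to 0
  have hE1tendsto : Tendsto E₁ (𝓝[<] T) (𝓝 0) := by
    set F : ℝ → ℝ := (Ico t₀ T).indicator g₀ with hFdef
    have hF : Integrable F := (integrable_indicator_iff measurableSet_Ico).mpr hE1int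
    have hμ : Tendsto (fun t => volume (Ico t T)) (𝓝[<] T) (𝓝 0) := by
      have h1 : Tendsto (fun t : ℝ => T - t) (𝓝[<] T) (𝓝 0) := by
        have h2 : Tendsto (fun t : ℝ => T - t) (𝓝[<] T) (𝓝 (T - T)) :=
          Tendsto.sub tendsto_const_nhds tendT
        simpa using h2
      have h2 := ENNReal.tendsto_ofReal h1
      simp only [ENNReal.ofReal_zero] at h2
      refine h2.congr fun t => ?_
      rw [Real.volume_Ico]
    have h3 := hF.tendsto_setIntegral_nhds_zero (s := fun t => Ico t T) hμ
    refine h3.congr' ?_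
    filter_upwards [hIoomem t₀ hT] with t ht
    rw [hFdef, setIntegral_indicator measurableSet_Ico,
      inter_eq_left.mpr (Ico_subset_Ico_left (le_of_lt ht.1))]
  -- geometric quantities
  set m : ℝ → ℝ := fun t => (inner ℝ (y t) (y t) : ℝ) with hmdef
  set ip : ℝ → ℝ := fun t => (inner ℝ (y t) (f t) : ℝ) with hipdef
  set ρ : ℝ → ℝ := fun t => m t ^ (-α / 2) with hρdef
  set gg : ℝ → ℝ := fun t => -(α * (m t ^ (-α / 2 - 1) * ip t)) with hggdef
  set w : ℝ → EuclideanSpace ℝ (Fin n) := fun t =>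
    (-(m t ^ (-(3:ℝ) / 2)) * ip t) • y t + (m t ^ (-(1:ℝ) / 2)) • f t with hwdef
  set u : ℝ → EuclideanSpace ℝ (Fin n) := fun t =>
    (m t ^ (-(1:ℝ) / 2)) • y t with hudef
  have h4c : (0:ℝ) < 4 / c := div_pos (by norm_num) hc
  have hmpos : ∀ t ∈ Ico t₀ T, 0 < m t := by
    intro t ht
    simp only [hmdef]
    rw [real_inner_self_eq_norm_sq]
    exact pow_pos (norm_pos_iff.mpr (hy0 t ht)) 2
  have hmy : ∀ (t : ℝ) (p : ℝ), ‖y t‖ ^ p = m t ^ (p / 2) := fun t p =>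
    norm_rpow_eq_inner (y t) p
  have hmmul : ∀ t ∈ Ico t₀ T, ∀ p q : ℝ, m t ^ p * m t ^ q = m t ^ (p + q) :=
    fun t ht p q => (Real.rpow_add (hmpos t ht) p q).symm
  have hρnorm : ∀ t, ρ t = (‖y t‖ ^ α)⁻¹ := by
    intro t
    simp only [hρdef]
    rw [← hmy t (-α), Real.rpow_neg (norm_nonneg _)]
  have hρinv : ∀ t ∈ Ico t₀ T, (ρ t)⁻¹ = m t ^ (α / 2) := by
    intro t ht
    rw [hρnorm t, inv_inv, hmy t α]
  have hρpos : ∀ t ∈ Ico t₀ T, 0 < ρ t := fun t ht =>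
    Real.rpow_pos_of_pos (hmpos t ht) _
  have hminv : ∀ t, m t ^ (-(1:ℝ) / 2) = ‖y t‖⁻¹ := by
    intro t
    rw [← hmy t (-(1:ℝ)), Real.rpow_neg (norm_nonneg _), Real.rpow_one]
  -- bound on the inner product with f
  have hip_bound : ∀ t ∈ Ico t₀ T,
      |ip t| ≤ m t ^ ((1:ℝ)/2) * (m t ^ ((1 + α)/2) * E₀ t) := by
    intro t ht
    calc |ip t| ≤ ‖y t‖ * ‖f t‖ := abs_real_inner_le_norm _ _
      _ ≤ ‖y t‖ * (‖y t‖ ^ (1 + α) * E₀ t) :=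
          mul_le_mul_of_nonneg_left (hfE t ht) (norm_nonneg _)
      _ = m t ^ ((1:ℝ)/2) * (m t ^ ((1 + α)/2) * E₀ t) := by
          rw [hmy t (1 + α)]
          nth_rewrite 1 [← Real.rpow_one ‖y t‖]
          rw [hmy t 1]
  -- continuity facts
  have cont_m : ContinuousOn m (Ico t₀ T) := hycont.inner hycont
  have cont_ip : ContinuousOn ip (Ico t₀ T) := hycont.inner hfcont
  have cont_mp : ∀ p : ℝ, ContinuousOn (fun t => m t ^ p) (Ico t₀ T) :=
    fun p => cont_m.rpow_const (fun t ht => Or.inl (ne_of_gt (hmpos t ht)))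
  have cont_gg : ContinuousOn gg (Ico t₀ T) := by
    simp only [hggdef]
    exact (continuousOn_const.mul ((cont_mp _).mul cont_ip)).neg
  have cont_w : ContinuousOn w (Ico t₀ T) := by
    simp only [hwdef]
    exact (((cont_mp _).neg.mul cont_ip).smul hycont).add ((cont_mp _).smul hfcont)
  -- the key inner-product derivative identity
  have hM : ∀ t : ℝ,
      (inner ℝ (y t) ((a * ‖y t‖ ^ α) • y t + f t) : ℝ) +
      (inner ℝ ((a * ‖y t‖ ^ α) • y t + f t) (y t) : ℝ) =
      2 * (a * m t ^ (α/2) * m t + ip t) := by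
    intro t
    simp only [hmdef, hipdef]
    rw [← norm_rpow_eq_inner (y t) α]
    simp only [inner_add_right, inner_add_left, real_inner_smul_right,
      real_inner_smul_left, real_inner_comm (f t) (y t)]
    ring
  -- derivative of ρ
  have hρder : ∀ t ∈ Ioo t₀ T, HasDerivAt ρ (-c + gg t) t := by
    intro t ht
    have ht' : t ∈ Ico t₀ T := ⟨le_of_lt ht.1, ht.2⟩
    have hy' := hode t ht
    have hm' := HasDerivAt.inner ℝ hy' hy'
    rw [hM t] at hm'
    have hd := hm'.rpow_const (p := -α / 2) (Or.inl (ne_of_gt (hmpos t ht')))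
    have heq : 2 * (a * m t ^ (α/2) * m t + ip t) * (-α / 2) * m t ^ (-α / 2 - 1)
        = -c + gg t := by
      have hpow1 : m t ^ (α/2) * m t * m t ^ (-α / 2 - 1) = 1 := by
        nth_rewrite 2 [← Real.rpow_one (m t)]
        rw [hmmul t ht', hmmul t ht', show α/2 + 1 + (-α/2 - 1) = (0:ℝ) by ring,
          Real.rpow_zero]
      simp only [hggdef, hcdef]
      linear_combination (-(a * α)) * hpow1
    rw [heq] at hd
    exact hd
  have hgg_bound : ∀ t ∈ Ico t₀ T, |gg t| ≤ α * E₀ t := by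
    intro t ht
    have hpw : 0 ≤ m t ^ (-α / 2 - 1) := le_of_lt (Real.rpow_pos_of_pos (hmpos t ht) _)
    have h1 : |gg t| = α * (m t ^ (-α / 2 - 1) * |ip t|) := by
      simp only [hggdef]
      rw [abs_neg, abs_mul, abs_mul, abs_of_pos hα, abs_of_nonneg hpw]
    rw [h1]
    have h2 : m t ^ (-α / 2 - 1) * |ip t| ≤ E₀ t := by
      calc m t ^ (-α / 2 - 1) * |ip t|
          ≤ m t ^ (-α / 2 - 1) * (m t ^ ((1:ℝ)/2) * (m t ^ ((1 + α)/2) * E₀ t)) :=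
            mul_le_mul_of_nonneg_left (hip_bound t ht) hpw
        _ = m t ^ (-α / 2 - 1) * m t ^ ((1:ℝ)/2) * m t ^ ((1 + α)/2) * E₀ t := by ring
        _ = E₀ t := by
            rw [hmmul t ht, hmmul t ht, show -α/2 - 1 + 1/2 + (1+α)/2 = (0:ℝ) by ring,
              Real.rpow_zero, one_mul]
    exact mul_le_mul_of_nonneg_left h2 (le_of_lt hα)
  -- derivative of u
  have huder : ∀ t ∈ Ioo t₀ T, HasDerivAt u (w t) t := by
    intro t ht
    have ht' : t ∈ Ico t₀ T := ⟨le_of_lt ht.1, ht.2⟩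
    have hy' := hode t ht
    have hm' := HasDerivAt.inner ℝ hy' hy'
    rw [hM t] at hm'
    have hcder := hm'.rpow_const (p := -(1:ℝ) / 2) (Or.inl (ne_of_gt (hmpos t ht')))
    have hD := hcder.smul hy'
    have hco : m t ^ (-(1:ℝ) / 2) * (a * ‖y t‖ ^ α) +
          2 * (a * m t ^ (α/2) * m t + ip t) * (-(1:ℝ) / 2) *
          m t ^ (-(1:ℝ) / 2 - 1)
        = -(m t ^ (-(3:ℝ) / 2)) * ip t := by
      rw [hmy t α]
      rw [show -(1:ℝ)/2 - 1 = -(3:ℝ)/2 by norm_num]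
      have e1 : m t * m t ^ (-(3:ℝ)/2) = m t ^ (-(1:ℝ)/2) := by
        nth_rewrite 1 [← Real.rpow_one (m t)]
        rw [hmmul t ht', show (1:ℝ) + -(3:ℝ)/2 = -(1:ℝ)/2 by norm_num]
      linear_combination (-(a * m t ^ (α/2))) * e1
    have heq : (m t ^ (-(1:ℝ) / 2)) • ((a * ‖y t‖ ^ α) • y t + f t) +
        (2 * (a * m t ^ (α/2) * m t + ip t) * (-(1:ℝ) / 2) *
          m t ^ (-(1:ℝ) / 2 - 1)) • y t = w t := by
      rw [smul_add, smul_smul, add_right_comm, ← add_smul, hco]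
    rw [heq] at hD
    exact hD
  have hw_bound : ∀ t ∈ Ico t₀ T, ‖w t‖ ≤ 2 * m t ^ (α/2) * E₀ t := by
    intro t ht
    have hnn : ∀ p : ℝ, 0 ≤ m t ^ p := fun p =>
      le_of_lt (Real.rpow_pos_of_pos (hmpos t ht) p)
    have hyn : ‖y t‖ = m t ^ ((1:ℝ)/2) := by
      nth_rewrite 1 [← Real.rpow_one ‖y t‖]
      rw [hmy t 1]
    have hfb : ‖f t‖ ≤ m t ^ ((1 + α)/2) * E₀ t := by
      rw [← hmy t (1 + α)]; exact hfE t ht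
    have step1 : ‖w t‖ ≤ m t ^ (-(3:ℝ)/2) * |ip t| * m t ^ ((1:ℝ)/2)
        + m t ^ (-(1:ℝ)/2) * ‖f t‖ := by
      simp only [hwdef]
      calc ‖(-(m t ^ (-(3:ℝ) / 2)) * ip t) • y t + (m t ^ (-(1:ℝ) / 2)) • f t‖
          ≤ ‖(-(m t ^ (-(3:ℝ) / 2)) * ip t) • y t‖ + ‖(m t ^ (-(1:ℝ) / 2)) • f t‖ :=
            norm_add_le _ _
        _ = m t ^ (-(3:ℝ)/2) * |ip t| * m t ^ ((1:ℝ)/2)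
            + m t ^ (-(1:ℝ)/2) * ‖f t‖ := by
            rw [norm_smul, norm_smul, Real.norm_eq_abs, Real.norm_eq_abs, abs_mul,
              abs_neg, abs_of_nonneg (hnn _), abs_of_nonneg (hnn _), hyn]
    have step2 : m t ^ (-(3:ℝ)/2) * |ip t| * m t ^ ((1:ℝ)/2)
        + m t ^ (-(1:ℝ)/2) * ‖f t‖
        ≤ m t ^ (-(3:ℝ)/2) * (m t ^ ((1:ℝ)/2) * (m t ^ ((1 + α)/2) * E₀ t)) *
            m t ^ ((1:ℝ)/2) + m t ^ (-(1:ℝ)/2) * (m t ^ ((1 + α)/2) * E₀ t) := by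
      refine add_le_add ?_ ?_
      · exact mul_le_mul_of_nonneg_right
          (mul_le_mul_of_nonneg_left (hip_bound t ht) (hnn _)) (hnn _)
      · exact mul_le_mul_of_nonneg_left hfb (hnn _)
    have step3 : m t ^ (-(3:ℝ)/2) * (m t ^ ((1:ℝ)/2) * (m t ^ ((1 + α)/2) * E₀ t)) *
            m t ^ ((1:ℝ)/2) + m t ^ (-(1:ℝ)/2) * (m t ^ ((1 + α)/2) * E₀ t)
        = 2 * m t ^ (α/2) * E₀ t := by
      have e1 : m t ^ (-(3:ℝ)/2) * m t ^ ((1:ℝ)/2) * m t ^ ((1+α)/2) * m t ^ ((1:ℝ)/2)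
          = m t ^ (α/2) := by
        rw [hmmul t ht, hmmul t ht, hmmul t ht,
          show -(3:ℝ)/2 + 1/2 + (1+α)/2 + 1/2 = α/2 by ring]
      have e2 : m t ^ (-(1:ℝ)/2) * m t ^ ((1+α)/2) = m t ^ (α/2) := by
        rw [hmmul t ht, show -(1:ℝ)/2 + (1+α)/2 = α/2 by ring]
      linear_combination E₀ t * e1 + E₀ t * e2
    linarith [step1, step2]
  -- FTC for ρ
  have hρFTC : ∀ s b, t₀ < s → s ≤ b → b < T →
      ρ b - ρ s = -c * (b - s) + ∫ τ in s..b, gg τ := by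
    intro s b hs hsb hb
    have hsub : Icc s b ⊆ Ico t₀ T := fun x hx =>
      ⟨le_trans (le_of_lt hs) hx.1, lt_of_le_of_lt hx.2 hb⟩
    have hggInt : IntervalIntegrable gg volume s b :=
      ContinuousOn.intervalIntegrable (by rw [uIcc_of_le hsb]; exact cont_gg.mono hsub)
    have hint : IntervalIntegrable (fun τ => -c + gg τ) volume s b :=
      intervalIntegrable_const.add hggInt
    have hftc := intervalIntegral.integral_eq_sub_of_hasDerivAt (f := ρ)
      (f' := fun τ => -c + gg τ) (a := s) (b := b)
      (fun x hx => by
        rw [uIcc_of_le hsb] at hx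
        exact hρder x ⟨lt_of_lt_of_le hs hx.1, lt_of_le_of_lt hx.2 hb⟩) hint
    rw [← hftc, intervalIntegral.integral_add intervalIntegrable_const hggInt,
      intervalIntegral.integral_const, smul_eq_mul]
    ring
  have hggest : ∀ s b, t₀ ≤ s → s ≤ b → b < T →
      |∫ τ in s..b, gg τ| ≤ α * ∫ τ in Ico s T, E₀ τ := by
    intro s b hs hsb hb
    have hsub : Icc s b ⊆ Ico t₀ T := fun x hx =>
      ⟨le_trans hs hx.1, lt_of_le_of_lt hx.2 hb⟩
    have hsIco : s ∈ Ico t₀ T := ⟨hs, lt_of_le_of_lt hsb hb⟩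
    have hggInt : IntervalIntegrable gg volume s b :=
      ContinuousOn.intervalIntegrable (by rw [uIcc_of_le hsb]; exact cont_gg.mono hsub)
    have hE0Int : IntervalIntegrable E₀ volume s b :=
      (hE0int.mono_set (by rw [uIcc_of_le hsb]; exact hsub)).intervalIntegrable
    have h1 : |∫ τ in s..b, gg τ| ≤ ∫ τ in s..b, |gg τ| := by
      have h := intervalIntegral.norm_integral_le_integral_norm (f := gg)
        (μ := volume) (a := s) (b := b) hsb
      simpa [Real.norm_eq_abs] using h
    have h2 : (∫ τ in s..b, |gg τ|) ≤ ∫ τ in s..b, α * E₀ τ :=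
      intervalIntegral.integral_mono_on hsb hggInt.abs (hE0Int.const_mul α)
        (fun x hx => hgg_bound x (hsub hx))
    have h3 : (∫ τ in s..b, α * E₀ τ) = α * ∫ τ in s..b, E₀ τ :=
      intervalIntegral.integral_const_mul α E₀
    have h4 : (∫ τ in s..b, E₀ τ) ≤ ∫ τ in Ico s T, E₀ τ := by
      rw [intervalIntegral.integral_of_le hsb]
      refine setIntegral_mono_set (hE0ints s hsIco) ?_ ?_
      · filter_upwards [ae_restrict_mem measurableSet_Ico] with τ hτ using
          hE0nn τ ⟨le_trans hs hτ.1, hτ.2⟩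
      · exact HasSubset.Subset.eventuallyLE
          (fun x hx => ⟨le_of_lt hx.1, lt_of_le_of_lt hx.2 hb⟩)
    calc |∫ τ in s..b, gg τ| ≤ ∫ τ in s..b, α * E₀ τ := le_trans h1 h2
      _ = α * ∫ τ in s..b, E₀ τ := h3
      _ ≤ α * ∫ τ in Ico s T, E₀ τ := mul_le_mul_of_nonneg_left h4 hα.le
  -- blow-up of the norm means ρ → 0
  have hρlim : Tendsto ρ (𝓝[<] T) (𝓝 0) := by
    have h1 : Tendsto (fun t => ‖y t‖ ^ α) (𝓝[<] T) atTop :=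
      (tendsto_rpow_atTop hα).comp hblow
    have h2 := h1.inv_tendsto_atTop
    exact h2.congr fun t => (hρnorm t).symm
  -- the key estimate for ρ
  have hρest : ∀ s ∈ Ioo t₀ T, |c * (T - s) - ρ s| ≤ α * ((T - s) * E₁ s) := by
    intro s hs
    have hkey : ∀ b ∈ Ioo s T, |ρ b - ρ s + c * (b - s)| ≤ α * ∫ τ in Ico s T, E₀ τ := by
      intro b hb
      rw [hρFTC s b hs.1 (le_of_lt hb.1) hb.2]
      have e : -c * (b - s) + (∫ τ in s..b, gg τ) + c * (b - s) = ∫ τ in s..b, gg τ := by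
        ring
      rw [e]
      exact hggest s b (le_of_lt hs.1) (le_of_lt hb.1) hb.2
    have hlim : Tendsto (fun b => |ρ b - ρ s + c * (b - s)|) (𝓝[<] T)
        (𝓝 |0 - ρ s + c * (T - s)|) := by
      have h5 : Tendsto (fun b => ρ b - ρ s + c * (b - s)) (𝓝[<] T)
          (𝓝 (0 - ρ s + c * (T - s))) :=
        (hρlim.sub_const (ρ s)).add ((tendT.sub_const s).const_mul c)
      exact h5.abs
    have hle := le_of_tendsto hlim
      (by filter_upwards [hIoomem s hs.2] with b hb using hkey b hb)
    have e2 : |0 - ρ s + c * (T - s)| = |c * (T - s) - ρ s| := by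
      congr 1; ring
    rw [e2] at hle
    exact le_trans hle (mul_le_mul_of_nonneg_left
      (hE0bound s ⟨hs.1.le, hs.2⟩) hα.le)
  -- choose t₁
  have hevsmall : ∀ᶠ s in 𝓝[<] T, s ∈ Ioo t₀ T ∧ E₁ s < a / 2 := by
    filter_upwards [hIoomem t₀ hT,
      hE1tendsto.eventually (gt_mem_nhds (half_pos ha))] with s h1 h2
    exact ⟨h1, h2⟩
  obtain ⟨l, hl, hlsub⟩ := mem_nhdsLT_iff_exists_Ioo_subset.mp hevsmall
  set t₁ : ℝ := max l ((t₀ + T)/2) with ht₁def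
  have ht₁T : t₁ < T := by
    apply max_lt hl
    linarith
  have ht₁0 : t₀ < t₁ := lt_of_lt_of_le (by linarith) (le_max_right _ _)
  have hmem : ∀ s ∈ Ioo t₁ T, s ∈ Ioo t₀ T ∧ E₁ s < a / 2 := fun s hs =>
    hlsub ⟨lt_of_le_of_lt (le_max_left _ _) hs.1, hs.2⟩
  -- lower and upper bounds for ρ
  have hρlow : ∀ s ∈ Ioo t₁ T, c / 2 * (T - s) ≤ ρ s := by
    intro s hs
    obtain ⟨hs0, hsE⟩ := hmem s hs
    have h1 := hρest s hs0
    have hTs : (0:ℝ) ≤ T - s := by linarith [hs.2]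
    have hE1s := hE1nn s ⟨hs0.1.le, hs0.2⟩
    have h2 : α * ((T - s) * E₁ s) ≤ c / 2 * (T - s) := by
      calc α * ((T-s) * E₁ s) ≤ α * ((T-s) * (a/2)) :=
            mul_le_mul_of_nonneg_left
              (mul_le_mul_of_nonneg_left (le_of_lt hsE) hTs) hα.le
        _ = c / 2 * (T - s) := by rw [hcdef]; ring
    have h3 := abs_le.mp h1
    linarith [h3.2, h2]
  have hρhigh : ∀ s ∈ Ioo t₁ T, ρ s ≤ 3 * c / 2 * (T - s) := by
    intro s hs
    obtain ⟨hs0, hsE⟩ := hmem s hs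
    have h1 := hρest s hs0
    have hTs : (0:ℝ) ≤ T - s := by linarith [hs.2]
    have h2 : α * ((T - s) * E₁ s) ≤ c / 2 * (T - s) := by
      calc α * ((T-s) * E₁ s) ≤ α * ((T-s) * (a/2)) :=
            mul_le_mul_of_nonneg_left
              (mul_le_mul_of_nonneg_left (le_of_lt hsE) hTs) hα.le
        _ = c / 2 * (T - s) := by rw [hcdef]; ring
    have h3 := abs_le.mp h1
    linarith [h3.1, h2]
  -- pointwise bound for w in terms of g₀
  have hwb2 : ∀ τ ∈ Ioo t₁ T, ‖w τ‖ ≤ 4 / c * g₀ τ := by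
    intro τ hτ
    obtain ⟨hτ0, _⟩ := hmem τ hτ
    have hτ' : τ ∈ Ico t₀ T := ⟨hτ0.1.le, hτ0.2⟩
    have hTτ : (0:ℝ) < T - τ := by linarith [hτ.2]
    have h1 := hw_bound τ hτ'
    have hinv : m τ ^ (α/2) ≤ 2 / (c * (T - τ)) := by
      rw [← hρinv τ hτ']
      have hρl := hρlow τ hτ
      have hpos : (0:ℝ) < c / 2 * (T - τ) := mul_pos (by linarith) hTτ
      have h5 : (ρ τ)⁻¹ ≤ (c / 2 * (T - τ))⁻¹ := inv_anti₀ hpos hρl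
      have h6 : (c / 2 * (T - τ))⁻¹ = 2 / (c * (T - τ)) := by
        rw [eq_div_iff (ne_of_gt (mul_pos hc hTτ))]
        field_simp
      rw [← h6]
      exact h5
    calc ‖w τ‖ ≤ 2 * m τ ^ (α/2) * E₀ τ := h1
      _ ≤ 2 * (2 / (c * (T - τ))) * E₀ τ :=
          mul_le_mul_of_nonneg_right
            (mul_le_mul_of_nonneg_left hinv (by norm_num)) (hE0nn τ hτ')
      _ = 4 / c * g₀ τ := by
          simp only [hg₀def]
          have h7 : c ≠ 0 := hc.ne'
          have h8 : T - τ ≠ 0 := ne_of_gt hTτ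
          field_simp
          ring
  -- FTC estimate for u
  have huFTC : ∀ s b, t₁ < s → s ≤ b → b < T → ‖u b - u s‖ ≤ 4 / c * E₁ s := by
    intro s b hs hsb hb
    have hsub : Icc s b ⊆ Ico t₀ T := fun x hx =>
      ⟨le_trans (le_trans ht₁0.le hs.le) hx.1, lt_of_le_of_lt hx.2 hb⟩
    have hsub1 : Icc s b ⊆ Ioo t₁ T := fun x hx =>
      ⟨lt_of_lt_of_le hs hx.1, lt_of_le_of_lt hx.2 hb⟩
    have hsIco : s ∈ Ico t₀ T := hsub ⟨le_refl s, hsb⟩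
    have hwInt : IntervalIntegrable w volume s b :=
      ContinuousOn.intervalIntegrable (by rw [uIcc_of_le hsb]; exact cont_w.mono hsub)
    have hftc := intervalIntegral.integral_eq_sub_of_hasDerivAt (f := u) (f' := w)
      (a := s) (b := b)
      (fun x hx => by
        rw [uIcc_of_le hsb] at hx
        exact huder x ⟨lt_trans ht₁0 (lt_of_lt_of_le hs hx.1),
          lt_of_le_of_lt hx.2 hb⟩) hwInt
    have hg₀Int : IntervalIntegrable (fun τ => 4 / c * g₀ τ) volume s b := by
      apply IntegrableOn.intervalIntegrable
      rw [uIcc_of_le hsb]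
      exact Integrable.const_mul (hE1int.mono_set hsub) (4/c)
    calc ‖u b - u s‖ = ‖∫ τ in s..b, w τ‖ := by rw [hftc]
      _ ≤ ∫ τ in s..b, ‖w τ‖ := intervalIntegral.norm_integral_le_integral_norm hsb
      _ ≤ ∫ τ in s..b, 4 / c * g₀ τ :=
          intervalIntegral.integral_mono_on hsb hwInt.norm hg₀Int
            (fun x hx => hwb2 x (hsub1 hx))
      _ = 4 / c * ∫ τ in s..b, g₀ τ := intervalIntegral.integral_const_mul _ _
      _ ≤ 4 / c * E₁ s := by
          refine mul_le_mul_of_nonneg_left ?_ h4c.le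
          rw [intervalIntegral.integral_of_le hsb]
          show (∫ τ in Ioc s b, g₀ τ) ≤ ∫ τ in Ico s T, g₀ τ
          refine setIntegral_mono_set (hg0ints s hsIco) ?_ ?_
          · filter_upwards [ae_restrict_mem measurableSet_Ico] with τ hτ using
              hg0nn τ ⟨le_trans hsIco.1 hτ.1, hτ.2⟩
          · exact HasSubset.Subset.eventuallyLE
              (fun x hx => ⟨le_of_lt hx.1, lt_of_le_of_lt hx.2 hb⟩)
  -- limit of u
  have hcauchy : Cauchy (map u (𝓝[<] T)) := by
    rw [Metric.cauchy_iff]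
    refine ⟨map_neBot, fun ε hε => ?_⟩
    have h2 : ∀ᶠ s in 𝓝[<] T, 4 / c * E₁ s < ε := by
      have h3 := hE1tendsto.const_mul (4/c)
      rw [mul_zero] at h3
      exact h3.eventually (gt_mem_nhds hε)
    have hev2 : ∀ᶠ s in 𝓝[<] T, s ∈ Ioo t₁ T ∧ 4 / c * E₁ s < ε := by
      filter_upwards [hIoomem t₁ ht₁T, h2] with s ha hb
      exact ⟨ha, hb⟩
    refine ⟨u '' {s | s ∈ Ioo t₁ T ∧ 4 / c * E₁ s < ε}, image_mem_map hev2, ?_⟩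
    rintro x ⟨s, hs, rfl⟩ x' ⟨b, hb, rfl⟩
    rcases le_total s b with h | h
    · calc dist (u s) (u b) = ‖u b - u s‖ := by rw [dist_eq_norm, norm_sub_rev]
        _ ≤ 4 / c * E₁ s := huFTC s b hs.1.1 h hb.1.2
        _ < ε := hs.2
    · calc dist (u s) (u b) = ‖u s - u b‖ := by rw [dist_eq_norm]
        _ ≤ 4 / c * E₁ b := huFTC b s hb.1.1 h hs.1.2
        _ < ε := hb.2
  obtain ⟨u₀, hu₀⟩ := cauchy_map_iff_exists_tendsto.mp hcauchy
  have hu_norm : ∀ t ∈ Ico t₀ T, ‖u t‖ = 1 := by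
    intro t ht
    show ‖(m t ^ (-(1:ℝ)/2)) • y t‖ = 1
    rw [norm_smul, hminv t, Real.norm_eq_abs,
      abs_of_nonneg (inv_nonneg.mpr (norm_nonneg _)),
      inv_mul_cancel₀ (norm_ne_zero_iff.mpr (hy0 t ht))]
  have hu0norm : ‖u₀‖ = 1 := by
    have h1 : Tendsto (fun t => ‖u t‖) (𝓝[<] T) (𝓝 ‖u₀‖) := hu₀.norm
    have h2 : Tendsto (fun t => ‖u t‖) (𝓝[<] T) (𝓝 1) := by
      refine tendsto_const_nhds.congr' ?_
      filter_upwards [hIoomem t₀ hT] with t ht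
      exact (hu_norm t ⟨ht.1.le, ht.2⟩).symm
    exact tendsto_nhds_unique h1 h2
  have hu_err : ∀ s ∈ Ioo t₁ T, ‖u s - u₀‖ ≤ 4 / c * E₁ s := by
    intro s hs
    have hlim : Tendsto (fun b => ‖u b - u s‖) (𝓝[<] T) (𝓝 ‖u₀ - u s‖) :=
      (hu₀.sub_const (u s)).norm
    have hle := le_of_tendsto hlim
      (by filter_upwards [hIoomem s hs.2] with b hb using
        huFTC s b hs.1 hb.1.le hb.2)
    rw [norm_sub_rev]
    exact hle
  -- the limit value L
  set L : ℝ := c ^ (-(1:ℝ)/α) with hLdef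
  have hL : 0 < L := Real.rpow_pos_of_pos hc _
  have hLinv : L = (c⁻¹) ^ ((1:ℝ)/α) := by
    rw [hLdef, show (-(1:ℝ)/α) = -((1:ℝ)/α) by ring, Real.rpow_neg hc.le,
      ← Real.inv_rpow hc.le]
  have hyρ : ∀ s ∈ Ico t₀ T, ‖y s‖ = ((ρ s)⁻¹) ^ ((1:ℝ)/α) := by
    intro s hs
    rw [hρinv s hs, ← hmy s α, ← Real.rpow_mul (norm_nonneg (y s)),
      mul_one_div, div_self (ne_of_gt hα), Real.rpow_one]
  have hsmul_eq : ∀ s ∈ Ico t₀ T, (T - s) ^ ((1:ℝ)/α) • y s =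
      ((T - s) ^ ((1:ℝ)/α) * ‖y s‖) • u s := by
    intro s hs
    show _ = ((T - s) ^ ((1:ℝ)/α) * ‖y s‖) • ((m s ^ (-(1:ℝ)/2)) • y s)
    rw [smul_smul, hminv s, mul_assoc,
      mul_inv_cancel₀ (norm_ne_zero_iff.mpr (hy0 s hs)), mul_one]
  -- constants for the radial estimate
  have h3c : (0:ℝ) < 2/(3*c) := div_pos (by norm_num) (by linarith)
  have h2c : (0:ℝ) < 2/c := div_pos (by norm_num) hc
  set K₀ : ℝ := (1:ℝ)/α * ((2/(3*c)) ^ ((1:ℝ)/α - 1) + (2/c) ^ ((1:ℝ)/α - 1))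
    with hK₀def
  have hK₀ : 0 < K₀ := mul_pos (one_div_pos.mpr hα)
    (add_pos (Real.rpow_pos_of_pos h3c _) (Real.rpow_pos_of_pos h2c _))
  set K : ℝ := K₀ * (2 * α / (c * c)) with hKdef
  have hK : 0 < K := mul_pos hK₀ (div_pos (by linarith) (mul_pos hc hc))
  -- the radial estimate
  have hr_err : ∀ s ∈ Ioo t₁ T,
      |(T - s) ^ ((1:ℝ)/α) * ‖y s‖ - L| ≤ K * E₁ s := by
    intro s hs
    obtain ⟨hs0, _⟩ := hmem s hs
    have hsI : s ∈ Ico t₀ T := ⟨hs0.1.le, hs0.2⟩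
    have hTs : (0:ℝ) < T - s := by linarith [hs.2]
    have hρp := hρpos s hsI
    have hρl := hρlow s hs
    have hρh := hρhigh s hs
    set x : ℝ := (T - s) * (ρ s)⁻¹ with hxdef
    have hxval : (T - s) ^ ((1:ℝ)/α) * ‖y s‖ = x ^ ((1:ℝ)/α) := by
      rw [hyρ s hsI, hxdef, Real.mul_rpow hTs.le (inv_nonneg.mpr hρp.le)]
    have hxmem : x ∈ Icc (2/(3*c)) (2/c) := by
      constructor
      · have i1 : (3 * c / 2 * (T - s))⁻¹ ≤ (ρ s)⁻¹ := inv_anti₀ hρp hρh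
        have i2 : (T - s) * (3 * c / 2 * (T - s))⁻¹ ≤ x :=
          mul_le_mul_of_nonneg_left i1 hTs.le
        have i3 : (T - s) * (3 * c / 2 * (T - s))⁻¹ = 2/(3*c) := by
          rw [eq_div_iff (by intro h; exact absurd h (ne_of_gt (by linarith : (0:ℝ) < 3*c)))]
          field_simp
        rw [← i3]
        exact i2
      · have hpos : (0:ℝ) < c / 2 * (T - s) := mul_pos (by linarith) hTs
        have i1 : (ρ s)⁻¹ ≤ (c / 2 * (T - s))⁻¹ := inv_anti₀ hpos hρl
        have i2 : x ≤ (T - s) * (c / 2 * (T - s))⁻¹ :=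
          mul_le_mul_of_nonneg_left i1 hTs.le
        have i3 : (T - s) * (c / 2 * (T - s))⁻¹ = 2/c := by
          rw [eq_div_iff hc.ne']
          field_simp
        rw [← i3]
        exact i2
    have hcmem : c⁻¹ ∈ Icc (2/(3*c)) (2/c) := by
      constructor
      · rw [inv_eq_one_div, div_le_div_iff₀ (by linarith : (0:ℝ) < 3*c) hc]
        linarith
      · rw [inv_eq_one_div, div_le_div_iff₀ hc hc]
        linarith
    have hxdist : |x - c⁻¹| ≤ 2 * α / (c * c) * E₁ s := by
      have h1 := hρest s hs0
      have e1 : x - c⁻¹ = (c * (T - s) - ρ s) * (c * ρ s)⁻¹ := by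
        rw [hxdef]
        field_simp
      rw [e1, abs_mul]
      have e2 : |(c * ρ s)⁻¹| ≤ (c * (c / 2 * (T - s)))⁻¹ := by
        rw [abs_of_nonneg (inv_nonneg.mpr (mul_nonneg hc.le hρp.le))]
        exact inv_anti₀ (mul_pos hc (mul_pos (by linarith) hTs))
          (mul_le_mul_of_nonneg_left hρl hc.le)
      calc |c * (T - s) - ρ s| * |(c * ρ s)⁻¹|
          ≤ (α * ((T - s) * E₁ s)) * (c * (c / 2 * (T - s)))⁻¹ :=
            mul_le_mul h1 e2 (abs_nonneg _)
              (mul_nonneg hα.le (mul_nonneg hTs.le (hE1nn s ⟨hs0.1.le, hs0.2⟩)))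
        _ = 2 * α / (c * c) * E₁ s := by
            have h7 : c ≠ 0 := hc.ne'
            have h8 : T - s ≠ 0 := ne_of_gt hTs
            field_simp
    have hlip := rpow_lip (p := (1:ℝ)/α) (one_div_pos.mpr hα) h3c hxmem hcmem
    rw [hxval, hLinv]
    calc |x ^ ((1:ℝ)/α) - (c⁻¹) ^ ((1:ℝ)/α)| ≤ K₀ * |x - c⁻¹| := hlip
      _ ≤ K₀ * (2 * α / (c * c) * E₁ s) :=
          mul_le_mul_of_nonneg_left hxdist hK₀.le
      _ = K * E₁ s := by rw [hKdef]; ring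
  -- final assembly
  set C : ℝ := K + L * (4 / c) with hCdef
  have hC : 0 < C := add_pos hK (mul_pos hL (div_pos (by norm_num) hc))
  have hfinal : ∀ s ∈ Ioo t₁ T,
      ‖(T - s) ^ ((1:ℝ)/α) • y s - L • u₀‖ ≤ C * E₁ s := by
    intro s hs
    obtain ⟨hs0, _⟩ := hmem s hs
    have hsI : s ∈ Ico t₀ T := ⟨hs0.1.le, hs0.2⟩
    have hsplit : (T - s) ^ ((1:ℝ)/α) • y s - L • u₀ =
        ((T - s) ^ ((1:ℝ)/α) * ‖y s‖ - L) • u s + L • (u s - u₀) := by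
      rw [hsmul_eq s hsI, sub_smul, smul_sub]
      abel
    rw [hsplit]
    calc ‖((T - s) ^ ((1:ℝ)/α) * ‖y s‖ - L) • u s + L • (u s - u₀)‖
        ≤ ‖((T - s) ^ ((1:ℝ)/α) * ‖y s‖ - L) • u s‖ + ‖L • (u s - u₀)‖ :=
          norm_add_le _ _
      _ = |(T - s) ^ ((1:ℝ)/α) * ‖y s‖ - L| * ‖u s‖ + |L| * ‖u s - u₀‖ := by
          rw [norm_smul ((T - s) ^ ((1:ℝ)/α) * ‖y s‖ - L) (u s),
            norm_smul L (u s - u₀), Real.norm_eq_abs, Real.norm_eq_abs]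
      _ = |(T - s) ^ ((1:ℝ)/α) * ‖y s‖ - L| + L * ‖u s - u₀‖ := by
          rw [hu_norm s hsI, mul_one, abs_of_pos hL]
      _ ≤ K * E₁ s + L * (4 / c * E₁ s) :=
          add_le_add (hr_err s hs) (mul_le_mul_of_nonneg_left (hu_err s hs) hL.le)
      _ = C * E₁ s := by rw [hCdef]; ring
  have htend : Tendsto (fun s => (T - s) ^ ((1:ℝ)/α) • y s) (𝓝[<] T) (𝓝 (L • u₀)) := by
    rw [tendsto_iff_norm_sub_tendsto_zero]
    have hCE : Tendsto (fun s => C * E₁ s) (𝓝[<] T) (𝓝 0) := by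
      have h3 := hE1tendsto.const_mul C
      rwa [mul_zero] at h3
    refine squeeze_zero' ?_ ?_ hCE
    · filter_upwards with s using norm_nonneg _
    · filter_upwards [hIoomem t₁ ht₁T] with s hs using hfinal s hs
  have hξnorm : ‖L • u₀‖ = L := by
    rw [norm_smul, Real.norm_eq_abs, abs_of_pos hL, hu0norm, mul_one]
  refine ⟨L • u₀, ?_, hξnorm, htend, ⟨C, hC, ?_⟩⟩
  · intro h
    rw [h, norm_zero] at hξnorm
    exact absurd hξnorm.symm (ne_of_gt hL)
  · filter_upwards [hIoomem t₁ ht₁T] with s hs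
    exact hfinal s hs
end

section
/- Let T* > 0, μ > 0, and let φ : [T, T*) → [0, 1] be absolutely continuous, H : [T,T*) → ℝ satisfy H(t) ≥ C₃(T*−t)^{−1} with C₃ > 0, and suppose φ' ≤ −μ H(t) φ + G(t) on (T, T*) with G ≥ 0 integrable near T*. Then for any t̄ < t < T*: φ(t) ≤ ((T*−t)/(T*−t̄))^{C₃μ} + ∫_{t̄}^{t} G(τ) dτ. In particular, if ∫_{t̄}^{T*} G(τ)dτ → 0 as t̄ → T*⁻, then φ(t) → 0 as t → T*⁻. -/
open scoped Topology

open MeasureTheory Set Filter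

theorem stmt_18 (T Tstar μ C₃ : ℝ) (hT : T < Tstar) (hμ : 0 < μ) (hC₃ : 0 < C₃)
    (φ d Hh G : ℝ → ℝ)
    (hφcont : ContinuousOn φ (Ico T Tstar))
    (hφrange : ∀ t ∈ Ico T Tstar, φ t ∈ Icc (0:ℝ) 1)
    (hH : ∀ t ∈ Ico T Tstar, C₃ * (Tstar - t)⁻¹ ≤ Hh t)
    (hG : ∀ t ∈ Ico T Tstar, 0 ≤ G t)
    (hGint : ∀ t ∈ Ico T Tstar, IntegrableOn G (Ico t Tstar))
    (hd : ∀ t ∈ Ioo T Tstar,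
      HasDerivAt φ (d t) t ∧ d t ≤ -μ * Hh t * φ t + G t) :
    (∀ tb ∈ Ico T Tstar, ∀ t ∈ Ioo tb Tstar,
      φ t ≤ ((Tstar - t) / (Tstar - tb)) ^ (C₃ * μ) + ∫ τ in tb..t, G τ) ∧
    (Tendsto (fun tb => ∫ τ in Ico tb Tstar, G τ) (𝓝[<] Tstar) (𝓝 0) →
      Tendsto φ (𝓝[<] Tstar) (𝓝 0)) := by
  have hCμ : 0 < C₃ * μ := mul_pos hC₃ hμ
  have part1 : ∀ tb ∈ Ico T Tstar, ∀ t ∈ Ioo tb Tstar,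
      φ t ≤ ((Tstar - t) / (Tstar - tb)) ^ (C₃ * μ) + ∫ τ in tb..t, G τ := by
    rintro tb ⟨hTtb, htbTs⟩ t ⟨htbt, htTs⟩
    set p : ℝ := -(C₃ * μ) with hp
    have hpos_t : (0:ℝ) < Tstar - t := by linarith
    have hpos_tb : (0:ℝ) < Tstar - tb := by linarith
    have hsub : Icc tb t ⊆ Ico T Tstar := fun x hx => ⟨le_trans hTtb hx.1, lt_of_le_of_lt hx.2 htTs⟩
    have hposx : ∀ x ∈ Icc tb t, (0:ℝ) < Tstar - x := fun x hx => by
      have := hx.2; linarith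
    -- weight continuity
    have wcont : ContinuousOn (fun x => (Tstar - x) ^ p) (Icc tb t) :=
      ((continuous_const.sub continuous_id).continuousOn).rpow_const
        (fun x hx => Or.inl (ne_of_gt (hposx x hx)))
    -- integrability
    have hGI : IntegrableOn G (Icc tb t) :=
      (hGint tb ⟨hTtb, htbTs⟩).mono_set (fun x hx => ⟨hx.1, lt_of_le_of_lt hx.2 htTs⟩)
    have φint : IntegrableOn (fun x => G x * (Tstar - x) ^ p) (Icc tb t) :=
      hGI.mul_continuousOn wcont isCompact_Icc
    -- derivative of g(x) = φ x * (Tstar - x)^p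
    have hderiv : ∀ x ∈ Ioo tb t, HasDerivWithinAt (fun x => φ x * (Tstar - x) ^ p)
        (d x * (Tstar - x) ^ p + φ x * ((-1) * p * (Tstar - x) ^ (p - 1))) (Ioi x) x := by
      intro x hx
      have hxT : x ∈ Ioo T Tstar := ⟨lt_of_le_of_lt hTtb hx.1, lt_trans hx.2 htTs⟩
      have hne : Tstar - x ≠ 0 := ne_of_gt (by linarith [hxT.2])
      have h1 : HasDerivAt (fun y => Tstar - y) (-1) x := by
        simpa using (hasDerivAt_id x).const_sub Tstar
      have h2 := h1.rpow_const (p := p) (Or.inl hne)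
      exact ((hd x hxT).1.mul h2).hasDerivWithinAt
    -- pointwise derivative bound
    have hφg : ∀ x ∈ Ioo tb t,
        d x * (Tstar - x) ^ p + φ x * ((-1) * p * (Tstar - x) ^ (p - 1))
          ≤ G x * (Tstar - x) ^ p := by
      intro x hx
      have hxT : x ∈ Ico T Tstar := ⟨le_trans hTtb hx.1.le, lt_trans hx.2 htTs⟩
      have hxpos : (0:ℝ) < Tstar - x := by have := hxT.2; linarith
      have hφx : 0 ≤ φ x := (hφrange x hxT).1
      have hdle : d x ≤ -(μ * (C₃ * (Tstar - x)⁻¹) * φ x) + G x := by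
        have h1 := (hd x ⟨lt_of_le_of_lt hTtb hx.1, lt_trans hx.2 htTs⟩).2
        have h2 : μ * (C₃ * (Tstar - x)⁻¹) * φ x ≤ μ * Hh x * φ x :=
          mul_le_mul_of_nonneg_right (mul_le_mul_of_nonneg_left (hH x hxT) hμ.le) hφx
        linarith
      have wpos : (0:ℝ) < (Tstar - x) ^ p := Real.rpow_pos_of_pos hxpos p
      have key : (Tstar - x) ^ (p - 1) = (Tstar - x) ^ p * (Tstar - x)⁻¹ := by
        rw [Real.rpow_sub_one (ne_of_gt hxpos), div_eq_mul_inv]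
      have hmul := mul_le_mul_of_nonneg_right hdle wpos.le
      calc d x * (Tstar - x) ^ p + φ x * ((-1) * p * (Tstar - x) ^ (p - 1))
          = d x * (Tstar - x) ^ p
            + φ x * (C₃ * μ) * ((Tstar - x) ^ p * (Tstar - x)⁻¹) := by rw [key]; ring
        _ ≤ (-(μ * (C₃ * (Tstar - x)⁻¹) * φ x) + G x) * (Tstar - x) ^ p
            + φ x * (C₃ * μ) * ((Tstar - x) ^ p * (Tstar - x)⁻¹) := by linarith
        _ = G x * (Tstar - x) ^ p := by ring
    -- continuity of g
    have gcont : ContinuousOn (fun x => φ x * (Tstar - x) ^ p) (Icc tb t) :=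
      (hφcont.mono hsub).mul wcont
    have main := intervalIntegral.sub_le_integral_of_hasDeriv_right_of_le htbt.le gcont hderiv φint hφg
    -- compare the weighted integral with the constant-weight integral
    have hint1 : IntervalIntegrable (fun x => G x * (Tstar - x) ^ p) volume tb t := by
      rw [intervalIntegrable_iff_integrableOn_Icc_of_le htbt.le]; exact φint
    have hint2 : IntervalIntegrable (fun x => G x * (Tstar - t) ^ p) volume tb t := by
      rw [intervalIntegrable_iff_integrableOn_Icc_of_le htbt.le]
      exact hGI.mul_const _
    have hcmp : (∫ y in tb..t, G y * (Tstar - y) ^ p) ≤ ∫ y in tb..t, G y * (Tstar - t) ^ p := by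
      apply intervalIntegral.integral_mono_on htbt.le hint1 hint2
      intro x hx
      have hGx : 0 ≤ G x := hG x (hsub hx)
      have : (Tstar - x) ^ p ≤ (Tstar - t) ^ p :=
        Real.rpow_le_rpow_of_nonpos hpos_t (by linarith [hx.2]) (by simp [hp]; positivity)
      exact mul_le_mul_of_nonneg_left this hGx
    have hconst : (∫ y in tb..t, G y * (Tstar - t) ^ p)
        = (∫ y in tb..t, G y) * (Tstar - t) ^ p := by
      exact intervalIntegral.integral_mul_const _ _
    have hmain2 : φ t * (Tstar - t) ^ p
        ≤ φ tb * (Tstar - tb) ^ p + (∫ y in tb..t, G y) * (Tstar - t) ^ p := by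
      have := main
      rw [hconst] at hcmp
      linarith
    -- multiply through by (Tstar - t)^(C₃ * μ)
    have hA : (0:ℝ) < (Tstar - t) ^ (C₃ * μ) := Real.rpow_pos_of_pos hpos_t _
    have hPA : (Tstar - t) ^ p * (Tstar - t) ^ (C₃ * μ) = 1 := by
      rw [← Real.rpow_add hpos_t]; simp [hp]
    have hQ : (Tstar - tb) ^ p * (Tstar - t) ^ (C₃ * μ)
        = ((Tstar - t) / (Tstar - tb)) ^ (C₃ * μ) := by
      rw [Real.div_rpow hpos_t.le hpos_tb.le, hp, Real.rpow_neg hpos_tb.le]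
      ring
    have hφtb : φ tb ≤ 1 := (hφrange tb ⟨hTtb, htbTs⟩).2
    have hQpos : 0 ≤ (Tstar - tb) ^ p * (Tstar - t) ^ (C₃ * μ) :=
      le_of_lt (mul_pos (Real.rpow_pos_of_pos hpos_tb p) hA)
    have := mul_le_mul_of_nonneg_right hmain2 hA.le
    have h1 : φ t * (Tstar - t) ^ p * (Tstar - t) ^ (C₃ * μ) = φ t := by
      rw [mul_assoc, hPA, mul_one]
    have h2 : φ tb * (Tstar - tb) ^ p * (Tstar - t) ^ (C₃ * μ)
        ≤ ((Tstar - t) / (Tstar - tb)) ^ (C₃ * μ) := by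
      rw [mul_assoc, ← hQ]
      nlinarith [mul_pos (Real.rpow_pos_of_pos hpos_tb p) hA]
    have h3 : (∫ y in tb..t, G y) * (Tstar - t) ^ p * (Tstar - t) ^ (C₃ * μ)
        = ∫ y in tb..t, G y := by
      rw [mul_assoc, hPA, mul_one]
    rw [add_mul, h1, h3] at this
    linarith
  refine ⟨part1, ?_⟩
  intro htend
  rw [NormedAddCommGroup.tendsto_nhds_zero]
  intro ε hε
  -- choose tb close to Tstar
  have h1 : ∀ᶠ tb in 𝓝[<] Tstar, (∫ τ in Ico tb Tstar, G τ) < ε / 2 :=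
    htend.eventually (gt_mem_nhds (by linarith))
  have h2 : ∀ᶠ tb in 𝓝[<] Tstar, tb ∈ Ioo T Tstar :=
    Ioo_mem_nhdsLT_of_mem ⟨hT, le_refl Tstar⟩
  obtain ⟨tb, hint, htb⟩ := (h1.and h2).exists
  -- the power term tends to 0
  have hpow : Tendsto (fun t => ((Tstar - t) / (Tstar - tb)) ^ (C₃ * μ)) (𝓝[<] Tstar) (𝓝 0) := by
    have hbase : Tendsto (fun t => (Tstar - t) / (Tstar - tb)) (𝓝[<] Tstar) (𝓝 0) := by
      have : Tendsto (fun t => (Tstar - t) / (Tstar - tb)) (𝓝 Tstar) (𝓝 ((Tstar - Tstar)/(Tstar - tb))) := by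
        exact (tendsto_const_nhds.sub tendsto_id).div_const _
      simpa using this.mono_left nhdsWithin_le_nhds
    have hcont : ContinuousAt (fun x : ℝ => x ^ (C₃ * μ)) 0 :=
      Real.continuousAt_rpow_const 0 (C₃ * μ) (Or.inr hCμ.le)
    have := hcont.tendsto.comp hbase
    simpa [Function.comp_def, Real.zero_rpow (ne_of_gt hCμ)] using this
  have h3 : ∀ᶠ t in 𝓝[<] Tstar, ((Tstar - t) / (Tstar - tb)) ^ (C₃ * μ) < ε / 2 :=
    hpow.eventually (gt_mem_nhds (by linarith))
  have h4 : ∀ᶠ t in 𝓝[<] Tstar, t ∈ Ioo tb Tstar :=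
    Ioo_mem_nhdsLT_of_mem ⟨htb.2, le_refl Tstar⟩
  filter_upwards [h3, h4] with t hpowt ht
  have htI : t ∈ Ico T Tstar := ⟨le_trans htb.1.le ht.1.le, ht.2⟩
  have hφt := hφrange t htI
  have hbound := part1 tb ⟨htb.1.le, htb.2⟩ t ht
  -- bound the interval integral by the Ico integral
  have hIineq : (∫ τ in tb..t, G τ) ≤ ∫ τ in Ico tb Tstar, G τ := by
    rw [intervalIntegral.integral_of_le ht.1.le]
    apply setIntegral_mono_set (hGint tb ⟨htb.1.le, htb.2⟩)
    · filter_upwards [ae_restrict_mem measurableSet_Ico] with x hx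
      exact hG x ⟨le_trans htb.1.le hx.1, hx.2⟩
    · exact HasSubset.Subset.eventuallyLE (fun x hx => ⟨hx.1.le, lt_of_le_of_lt hx.2 ht.2⟩)
  have : φ t < ε := by linarith
  rw [Real.norm_eq_abs, abs_lt]
  constructor <;> linarith [hφt.1]
end
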